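/- Fix an odd prime p. For a coprime pair (a,b) with b even, define ℓ(a/b) = Σ_{i=1}^{b/2} (−1)^{⌊(2i−1)a/b⌋}. Let N_{<x} = { (a,b) : gcd(a,b)=1, b even, 0 < a < 2b, max(a², b) < x } and S_{<x} = { (a,b) ∈ N_{<x} : p ∤ ℓ(a/b) }. Then #S_{<x} / #N_{<x} → 1 − 1/p as x → ∞. -/

import Mathlib

open Finset
open scoped Classical

/-- Linking number `ℓ(a/b) = Σ_{i=1}^{b/2} (−1)^{⌊(2i−1)a/b⌋}`. -/
def linkingNumber (a b : ℕ) : ℤ :=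
  ∑ i ∈ Finset.range (b / 2), (-1 : ℤ) ^ ((2 * i + 1) * a / b)

open Finset

def lkcnt (a b j : ℕ) : ℤ := ∑ i ∈ Finset.range (b/2), if (2*i+1)*a < j*b then 1 else 0

lemma div_eq_iff' {q b k : ℕ} (hb : 0 < b) : q / b = k ↔ (k*b ≤ q ∧ q < (k+1)*b) := by
  have h1 : k ≤ q / b ↔ k * b ≤ q := Nat.le_div_iff_mul_le hb
  have h2 : q / b < k+1 ↔ q < (k+1) * b := Nat.div_lt_iff_lt_mul hb
  omega

lemma lkcnt_succ_sub (a b k : ℕ) (hb : 0 < b) :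
    lkcnt a b (k+1) - lkcnt a b k
      = ∑ i ∈ Finset.range (b/2), if (2*i+1)*a / b = k then (1:ℤ) else 0 := by
  rw [lkcnt, lkcnt, ← Finset.sum_sub_distrib]
  refine Finset.sum_congr rfl fun i _ => ?_
  simp only [div_eq_iff' hb]
  have hmono : k*b ≤ (k+1)*b := Nat.mul_le_mul_right _ (Nat.le_succ _)
  split_ifs <;> omega

lemma linkingNumber_eq_sum_lkcnt (a b : ℕ) (ha : 0 < a) (hb : 0 < b) (hbe : Even b) :
    linkingNumber a b = ∑ k ∈ Finset.range a, (-1:ℤ)^k * (lkcnt a b (k+1) - lkcnt a b k) := by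
  simp_rw [fun k => lkcnt_succ_sub a b k hb, Finset.mul_sum]
  rw [Finset.sum_comm]
  rw [linkingNumber]
  refine Finset.sum_congr rfl fun i hi => ?_
  have hq : (2*i+1)*a/b < a := by
    apply (Nat.div_lt_iff_lt_mul hb).2
    have : 2*i+1 < b := by
      rcases hbe with ⟨t, ht⟩
      have : i < b / 2 := Finset.mem_range.1 hi
      omega
    nlinarith
  rw [Finset.sum_eq_single ((2*i+1)*a/b)]
  · simp
  · intro x _ hx; simp [Ne.symm hx]
  · intro hmem; exact absurd (Finset.mem_range.2 hq) hmem

lemma lkcnt_shift (a b j : ℕ) (ha : 0 < a) (hbe : Even b) (hj : j ≤ a) :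
    lkcnt a (b + 2*a) j = lkcnt a b j + j := by
  have hhalf : (b + 2*a)/2 = j + (b/2 + (a - j)) := by
    rcases hbe with ⟨t, ht⟩; omega
  rw [lkcnt, hhalf, Finset.sum_range_add]
  have h1 : ∀ i ∈ Finset.range j, (if (2*i+1)*a < j*(b+2*a) then (1:ℤ) else 0) = 1 := by
    intro i hi
    have hi' : i < j := Finset.mem_range.1 hi
    have : (2*i+1)*a < j*(b+2*a) := by nlinarith [Nat.one_le_iff_ne_zero.2 (by omega : j ≠ 0)]
    simp [this]
  rw [Finset.sum_congr rfl h1, Finset.sum_const, card_range, nsmul_eq_mul, mul_one]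
  have h2 : ∀ i, (if (2*(j+i)+1)*a < j*(b+2*a) then (1:ℤ) else 0)
      = (if (2*i+1)*a < j*b then (1:ℤ) else 0) := by
    intro i
    have : (2*(j+i)+1)*a < j*(b+2*a) ↔ (2*i+1)*a < j*b := by
      constructor <;> intro h <;> nlinarith
    simp [this]
  simp_rw [h2]
  rw [Finset.sum_range_add]
  have h3 : ∀ i ∈ Finset.range (a - j), (if (2*(b/2+i)+1)*a < j*b then (1:ℤ) else 0) = 0 := by
    intro i _
    have hb2 : 2*(b/2) = b := by rcases hbe with ⟨t,ht⟩; omega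
    have : ¬ (2*(b/2+i)+1)*a < j*b := by
      have : j*b ≤ a*b := Nat.mul_le_mul_right _ hj
      nlinarith
    simp [this]
  rw [Finset.sum_congr rfl h3]
  simp [lkcnt, add_comm]

lemma linkingNumber_add (a b : ℕ) (ha : Odd a) (hbe : Even b) (hb : 0 < b) :
    linkingNumber a (b + 2*a) = linkingNumber a b + 1 := by
  have ha0 : 0 < a := ha.pos
  have hbe' : Even (b + 2*a) := by rcases hbe with ⟨t,ht⟩; exact ⟨t+a, by omega⟩
  rw [linkingNumber_eq_sum_lkcnt a _ ha0 (by omega) hbe',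
      linkingNumber_eq_sum_lkcnt a b ha0 hb hbe]
  have : ∀ k ∈ Finset.range a, (-1:ℤ)^k * (lkcnt a (b+2*a) (k+1) - lkcnt a (b+2*a) k)
      = (-1:ℤ)^k * (lkcnt a b (k+1) - lkcnt a b k) + (-1:ℤ)^k := by
    intro k hk
    have hk' : k < a := Finset.mem_range.1 hk
    rw [lkcnt_shift a b (k+1) ha0 hbe (by omega), lkcnt_shift a b k ha0 hbe (by omega)]
    push_cast
    ring
  rw [Finset.sum_congr rfl this, Finset.sum_add_distrib, neg_one_geom_sum,
      if_neg (Nat.not_even_iff_odd.2 ha)]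

lemma linkingNumber_add_mul (a b k : ℕ) (ha : Odd a) (hbe : Even b) (hb : 0 < b) :
    linkingNumber a (b + 2*a*k) = linkingNumber a b + k := by
  induction k with
  | zero => simp
  | succ n ih =>
    have : b + 2*a*(n+1) = (b + 2*a*n) + 2*a := by ring
    rw [this, linkingNumber_add a _ ha (by rcases hbe with ⟨t,ht⟩; exact ⟨t+a*n, by rw [ht]; ring⟩) (by omega), ih]
    push_cast; ring


lemma class_count (p : ℕ) (hp : 0 < p) (c : ℤ) (m M : ℕ) :
    |(p:ℤ) * ((Finset.Ico m M).filter (fun k : ℕ => ¬ (p:ℤ) ∣ (c + k))).card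
      - ((p:ℤ)-1) * (Finset.Ico m M).card| ≤ p := by
  classical
  rcases le_or_gt M m with hMm | hMm
  · rw [Finset.Ico_eq_empty (by omega)]
    simp [hp]
  set N := (Finset.Ico m M).card with hN
  set T := ((Finset.Ico m M).filter (fun k : ℕ => (p:ℤ) ∣ (c + k))).card with hT
  have hsplit : ((Finset.Ico m M).filter (fun k : ℕ => ¬ (p:ℤ) ∣ (c + k))).card = N - T := by
    have := Finset.card_filter_add_card_filter_not
      (s := Finset.Ico m M) (p := fun k : ℕ => (p:ℤ) ∣ (c + k))
    omega
  have hTN : T ≤ N := Finset.card_filter_le _ _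
  rw [hsplit]
  have hcast : ((N - T : ℕ) : ℤ) = (N:ℤ) - T := by omega
  rw [hcast]
  have key : |(N:ℤ) - p * T| ≤ p := by
    set v : ℕ := ((-c) % p).toNat with hv
    have hp' : (0:ℤ) < p := by exact_mod_cast hp
    have hveq : (v : ℤ) = (-c) % p := Int.toNat_of_nonneg (Int.emod_nonneg _ hp'.ne')
    have hcond : ∀ k : ℕ, ((p:ℤ) ∣ (c + k)) ↔ k ≡ v [MOD p] := by
      intro k
      rw [← Int.natCast_modEq_iff, Int.ModEq]
      constructor
      · intro ⟨t, ht⟩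
        have : (k:ℤ) % p = (-c) % p := by
          have : (k:ℤ) = -c + p*t := by linarith
          rw [this, Int.add_mul_emod_self_left]
        rw [this, hveq, Int.emod_emod_of_dvd _ dvd_rfl]
      · intro h
        rw [hveq, Int.emod_emod_of_dvd _ dvd_rfl] at h
        have h2 : (p:ℤ) ∣ (k:ℤ) - (-c) := Int.ModEq.dvd h.symm
        rcases h2 with ⟨t, ht⟩
        exact ⟨t, by linarith⟩
    have hTeq : T = ((Finset.Ico m M).filter (fun k => k ≡ v [MOD p])).card := by
      rw [hT]; congr 1; apply Finset.filter_congr; intro k _; simp [hcond k]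
    have hcard := Nat.Ico_filter_modEq_card m M hp v
    rw [← hTeq] at hcard
    set u1 : ℤ := ⌈((m:ℚ) - v) / p⌉ with hu1
    set u2 : ℤ := ⌈((M:ℚ) - v) / p⌉ with hu2
    have hpq : (0:ℚ) < p := by exact_mod_cast hp
    have hb1 : ((m:ℚ) - v) / p ≤ u1 := Int.le_ceil _
    have hb1' : (u1:ℚ) < ((m:ℚ) - v) / p + 1 := Int.ceil_lt_add_one _
    have hb2 : ((M:ℚ) - v) / p ≤ u2 := Int.le_ceil _
    have hb2' : (u2:ℚ) < ((M:ℚ) - v) / p + 1 := Int.ceil_lt_add_one _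
    have hNval : (N:ℤ) = (M:ℤ) - m := by
      rw [hN, Nat.card_Ico]; omega
    -- translate to ℚ
    have q1 : (m:ℚ) - v ≤ u1 * p := (div_le_iff₀ hpq).1 hb1
    have q1' : ((u1:ℚ) - 1) * p < (m:ℚ) - v := (lt_div_iff₀ hpq).1 (by linarith)
    have q2 : (M:ℚ) - v ≤ u2 * p := (div_le_iff₀ hpq).1 hb2
    have q2' : ((u2:ℚ) - 1) * p < (M:ℚ) - v := (lt_div_iff₀ hpq).1 (by linarith)
    rcases le_or_gt u2 u1 with hcase | hcase
    · -- T = 0, and M - m ≤ p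
      have hT0 : (T:ℤ) = 0 := by rw [hcard]; omega
      have hqle : (u2:ℚ) * p ≤ u1 * p := by
        have h21 : (u2:ℚ) ≤ u1 := by exact_mod_cast hcase
        exact mul_le_mul_of_nonneg_right h21 (le_of_lt hpq)
      have : (M:ℚ) < (m:ℚ) + p := by linarith
      have hMmp : (M:ℤ) < (m:ℤ) + p := by exact_mod_cast this
      rw [hT0, hNval, abs_le]
      constructor
      · have : (0:ℤ) ≤ (M:ℤ) - m := by omega
        linarith
      · linarith
    · have hTval : (T:ℤ) = u2 - u1 := by rw [hcard]; omega
      have e1 : ((p:ℚ)) * ((u2:ℚ) - u1) < (M:ℚ) - m + p := by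
        have : (p:ℚ) * ((u2:ℚ) - u1) = u2 * p - u1 * p := by ring
        rw [this]; linarith
      have e2 : (M:ℚ) - m - p < (p:ℚ) * ((u2:ℚ) - u1) := by
        have : (p:ℚ) * ((u2:ℚ) - u1) = u2 * p - u1 * p := by ring
        rw [this]; linarith
      have e1' : (p:ℤ) * (u2 - u1) < (M:ℤ) - m + p := by exact_mod_cast e1
      have e2' : (M:ℤ) - m - p < (p:ℤ) * (u2 - u1) := by exact_mod_cast e2
      rw [hTval, hNval, abs_le]
      constructor <;> linarith
  rw [show (p:ℤ) * ((N:ℤ) - T) - ((p:ℤ)-1) * N = (N:ℤ) - p*T from by ring]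
  exact key



/-- `N_{<x}`: pairs `(a,b)` with `gcd(a,b) = 1`, `b` even, `0 < a < 2b`, and
height `max(a², b) < x`. -/
def NSet (x : ℝ) : Set (ℕ × ℕ) :=
  {ab | Nat.Coprime ab.1 ab.2 ∧ Even ab.2 ∧ 0 < ab.1 ∧ ab.1 < 2 * ab.2 ∧
    max ((ab.1 : ℝ) ^ 2) (ab.2 : ℝ) < x}

/-- `S_{<x}`: members of `N_{<x}` with `p ∤ ℓ(a/b)`. -/
def SSetP (p : ℕ) (x : ℝ) : Set (ℕ × ℕ) :=
  {ab ∈ NSet x | ¬ (p : ℤ) ∣ linkingNumber ab.1 ab.2}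

noncomputable def Ax (x : ℝ) : ℕ := ⌈Real.sqrt x⌉₊ + 1

noncomputable def Nfin (x : ℝ) : Finset (ℕ × ℕ) :=
  (Finset.range (Ax x) ×ˢ Finset.range (⌈x⌉₊)).filter fun ab =>
    Nat.Coprime ab.1 ab.2 ∧ Even ab.2 ∧ 0 < ab.1 ∧ ab.1 < 2 * ab.2 ∧
      max ((ab.1 : ℝ) ^ 2) (ab.2 : ℝ) < x

lemma sq_lt_imp_lt_Ax {a : ℕ} {x : ℝ} (h : (a:ℝ)^2 < x) : a < Ax x := by
  have h0 : (a:ℝ) ≤ Real.sqrt x := by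
    rw [show (a:ℝ) = Real.sqrt ((a:ℝ)^2) from (Real.sqrt_sq (by positivity)).symm]
    exact Real.sqrt_le_sqrt h.le
  have : (a:ℝ) ≤ (⌈Real.sqrt x⌉₊ : ℝ) := h0.trans (Nat.le_ceil _)
  have : a ≤ ⌈Real.sqrt x⌉₊ := by exact_mod_cast this
  simp [Ax]; omega

lemma mem_Nfin {x : ℝ} {ab : ℕ × ℕ} :
    ab ∈ Nfin x ↔ ab ∈ NSet x := by
  rw [Nfin, NSet, Finset.mem_filter, Finset.mem_product]
  constructor
  · rintro ⟨-, h⟩; exact h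
  · rintro ⟨h1, h2, h3, h4, h5⟩
    have hax : (ab.1:ℝ)^2 < x := lt_of_le_of_lt (le_max_left _ _) h5
    have hbx : (ab.2:ℝ) < x := lt_of_le_of_lt (le_max_right _ _) h5
    refine ⟨⟨Finset.mem_range.2 (sq_lt_imp_lt_Ax hax), Finset.mem_range.2 ?_⟩, h1, h2, h3, h4, h5⟩
    have : (ab.2:ℝ) < (⌈x⌉₊:ℝ) := lt_of_lt_of_le hbx (Nat.le_ceil _)
    exact_mod_cast this

lemma NSet_coe (x : ℝ) : NSet x = ↑(Nfin x) := by
  ext ab; simp [mem_Nfin]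

noncomputable def Sfin (p : ℕ) (x : ℝ) : Finset (ℕ × ℕ) :=
  (Nfin x).filter fun ab => ¬ (p : ℤ) ∣ linkingNumber ab.1 ab.2

lemma SSetP_coe (p : ℕ) (x : ℝ) : SSetP p x = ↑(Sfin p x) := by
  ext ab; simp [SSetP, Sfin, mem_Nfin]

lemma Ncard_eq (x : ℝ) : Nat.card (NSet x) = (Nfin x).card := by
  rw [NSet_coe, Nat.card_coe_set_eq, Set.ncard_coe_finset]

lemma Scard_eq (p : ℕ) (x : ℝ) : Nat.card (SSetP p x) = (Sfin p x).card := by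
  rw [SSetP_coe, Nat.card_coe_set_eq, Set.ncard_coe_finset]

/-- class labels -/
noncomputable def CL (x : ℝ) : Finset (ℕ × ℕ) :=
  ((Finset.range (Ax x)) ×ˢ (Finset.range (2 * Ax x))).filter fun q =>
    0 < q.1 ∧ q.2 < 2*q.1 ∧ Even q.2 ∧ q.1.Coprime q.2 ∧ (q.1:ℝ)^2 < x

def kap (q : ℕ × ℕ) : ℕ := if q.1 < 2*q.2 then 0 else 1

noncomputable def KK (x : ℝ) (q : ℕ × ℕ) : ℕ := ⌈(x - q.2)/(2*q.1)⌉₊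

lemma fiber_iff {x : ℝ} {q : ℕ × ℕ} (hq : q ∈ CL x) (k : ℕ) :
    (q.1, q.2 + 2*q.1*k) ∈ Nfin x ↔ k ∈ Finset.Ico (kap q) (KK x q) := by
  obtain ⟨a, r⟩ := q
  simp only [CL, Finset.mem_filter, Finset.mem_product] at hq
  obtain ⟨-, ha, hra, hre, hcop, hax⟩ := hq
  simp only [mem_Nfin, NSet, Set.mem_setOf_eq, Finset.mem_Ico]
  have hcop' : Nat.Coprime a (r + 2*a*k) ↔ Nat.Coprime a r := by
    rw [show r + 2*a*k = r + a*(2*k) by ring]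
    exact Nat.coprime_add_mul_left_right a r (2*k)
  have heven : Even (r + 2*a*k) := by
    rcases hre with ⟨t, ht⟩; exact ⟨t + a*k, by rw [ht]; ring⟩
  have hlt : (a < 2*(r + 2*a*k)) ↔ kap (a, r) ≤ k := by
    rcases Nat.eq_zero_or_pos k with hk | hk
    · subst hk
      simp only [Nat.mul_zero, Nat.add_zero]
      unfold kap
      split <;> simp <;> omega
    · have h4 : a < 2*(r + 2*a*k) := by nlinarith
      have h5 : kap (a, r) ≤ k := by unfold kap; split <;> omega
      simp [h4, h5]
  have hKK : ((r + 2*a*k : ℕ):ℝ) < x ↔ k < KK x (a, r) := by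
    rw [KK, Nat.lt_ceil]
    have h2a : (0:ℝ) < 2*(a:ℕ) := by positivity
    rw [lt_div_iff₀ h2a]
    push_cast
    constructor <;> intro h <;> nlinarith
  constructor
  · rintro ⟨-, -, -, h4, h5⟩
    have hbx := lt_of_le_of_lt (le_max_right _ _) h5
    exact ⟨hlt.1 h4, hKK.1 hbx⟩
  · rintro ⟨h1, h2⟩
    refine ⟨hcop'.2 hcop, heven, ha, hlt.2 h1, ?_⟩
    rw [max_lt_iff]
    exact ⟨hax, hKK.2 h2⟩

lemma decomp (x : ℝ) (Q : ℕ × ℕ → Prop) :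
    ((Nfin x).filter Q).card
      = ∑ q ∈ CL x, ((Finset.Ico (kap q) (KK x q)).filter
          (fun k => Q (q.1, q.2 + 2*q.1*k))).card := by
  classical
  rw [← Finset.card_sigma]
  apply Finset.card_bij' (fun ab _ => ⟨(ab.1, ab.2 % (2*ab.1)), ab.2 / (2*ab.1)⟩)
    (fun qk _ => (qk.1.1, qk.1.2 + 2*qk.1.1*qk.2))
  case hi =>
    rintro ⟨a, b⟩ hab
    rw [Finset.mem_filter] at hab
    obtain ⟨hN, hQ⟩ := hab
    have hmem := mem_Nfin.1 hN
    obtain ⟨h1, h2, h3, h4, h5⟩ := hmem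
    have ha2 : 0 < 2*a := by omega
    set r := b % (2*a) with hr
    set k := b / (2*a) with hk
    have hb : b = r + 2*a*k := (Nat.mod_add_div b (2*a)).symm
    have hq : (a, r) ∈ CL x := by
      simp only [CL, Finset.mem_filter, Finset.mem_product, Finset.mem_range]
      have hax : (a:ℝ)^2 < x := lt_of_le_of_lt (le_max_left _ _) h5
      have haAx : a < Ax x := sq_lt_imp_lt_Ax hax
      have hrlt : r < 2*a := Nat.mod_lt _ ha2
      refine ⟨⟨haAx, by omega⟩, h3, hrlt, ?_, ?_, hax⟩
      · -- Even r
        rcases h2 with ⟨t, ht⟩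
        have : Even (2*a*k) := ⟨a*k, by ring⟩
        rcases this with ⟨u, hu⟩
        exact ⟨t - u, by omega⟩
      · -- coprime
        have := (Nat.coprime_add_mul_left_right a r (2*k)).1
        apply this
        rw [show r + a*(2*k) = b by rw [hb]; ring]
        exact h1
    rw [Finset.mem_sigma]
    refine ⟨hq, ?_⟩
    rw [Finset.mem_filter]
    constructor
    · rw [← fiber_iff hq]
      simpa [← hb] using hN
    · simpa [← hb] using hQ
  case hj =>
    rintro ⟨⟨a, r⟩, k⟩ hqk
    rw [Finset.mem_sigma, Finset.mem_filter] at hqk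
    obtain ⟨hq, hk, hQ⟩ := hqk
    rw [Finset.mem_filter]
    exact ⟨(fiber_iff hq k).2 hk, hQ⟩
  case left_inv =>
    rintro ⟨a, b⟩ hab
    simp only []
    congr 1
    exact Nat.mod_add_div b (2*a)
  case right_inv =>
    rintro ⟨⟨a, r⟩, k⟩ hqk
    rw [Finset.mem_sigma] at hqk
    obtain ⟨hq, -⟩ := hqk
    simp only [CL, Finset.mem_filter, Finset.mem_product] at hq
    obtain ⟨-, ha, hra, -⟩ := hq
    have h1 : (r + 2*a*k) % (2*a) = r := by
      rw [Nat.add_mul_mod_self_left]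
      exact Nat.mod_eq_of_lt hra
    have h2 : (r + 2*a*k) / (2*a) = k := by
      rw [Nat.add_mul_div_left _ _ (by omega : 0 < 2*a), Nat.div_eq_of_lt hra]
      omega
    simp only [h1, h2]


lemma odd_of_class {a r : ℕ} (hcop : a.Coprime r) (hre : Even r) : Odd a := by
  rcases Nat.even_or_odd a with he | ho
  · exfalso
    have h2 : 2 ∣ Nat.gcd a r := Nat.dvd_gcd he.two_dvd hre.two_dvd
    rw [hcop] at h2
    omega
  · exact ho

lemma main_bound (p : ℕ) (hp : 0 < p) (x : ℝ) :
    |(p:ℤ) * ((Sfin p x).card : ℤ) - ((p:ℤ)-1) * ((Nfin x).card : ℤ)|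
      ≤ (p:ℤ) * (Ax x * (2 * Ax x)) := by
  classical
  have hn : ((Nfin x).card : ℤ)
      = ∑ q ∈ CL x, ((Finset.Ico (kap q) (KK x q)).card : ℤ) := by
    have h := decomp x (fun _ => True)
    simp only [Finset.filter_true] at h
    exact_mod_cast h
  have hs : ((Sfin p x).card : ℤ)
      = ∑ q ∈ CL x, (((Finset.Ico (kap q) (KK x q)).filter
          (fun k => ¬ (p:ℤ) ∣ linkingNumber q.1 (q.2 + 2*q.1*k))).card : ℤ) := by
    have h := decomp x (fun ab => ¬ (p:ℤ) ∣ linkingNumber ab.1 ab.2)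
    rw [Sfin]
    norm_cast
    convert h using 2
    · ext ab
      simp [Finset.mem_filter]
    · congr 1
      ext k
      simp [Finset.mem_filter]
  rw [hn, hs, Finset.mul_sum, Finset.mul_sum, ← Finset.sum_sub_distrib]
  refine le_trans (Finset.abs_sum_le_sum_abs _ _) ?_
  have hcardCL : (CL x).card ≤ Ax x * (2 * Ax x) := by
    refine le_trans (Finset.card_filter_le _ _) ?_
    rw [Finset.card_product, Finset.card_range, Finset.card_range]
  calc ∑ q ∈ CL x, |(p:ℤ) * (((Finset.Ico (kap q) (KK x q)).filter
          (fun k => ¬ (p:ℤ) ∣ linkingNumber q.1 (q.2 + 2*q.1*k))).card : ℤ)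
        - ((p:ℤ)-1) * ((Finset.Ico (kap q) (KK x q)).card : ℤ)|
      ≤ ∑ _q ∈ CL x, (p:ℤ) := by
        refine Finset.sum_le_sum fun q hq => ?_
        obtain ⟨a, r⟩ := q
        simp only [CL, Finset.mem_filter, Finset.mem_product] at hq
        obtain ⟨-, ha, hra, hre, hcop, -⟩ := hq
        have haodd : Odd a := odd_of_class hcop hre
        set b0 : ℕ := r + 2*a*(kap (a, r)) with hb0
        have hb0e : Even b0 := by
          rcases hre with ⟨t, ht⟩; exact ⟨t + a*(kap (a,r)), by rw [hb0, ht]; ring⟩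
        have hb0pos : 0 < b0 := by
          rw [hb0]; unfold kap
          split <;> omega
        set c : ℤ := linkingNumber a b0 - (kap (a,r)) with hc
        have hfe : ((Finset.Ico (kap (a,r)) (KK x (a,r))).filter
              (fun k => ¬ (p:ℤ) ∣ linkingNumber a (r + 2*a*k)))
            = ((Finset.Ico (kap (a,r)) (KK x (a,r))).filter
              (fun k : ℕ => ¬ (p:ℤ) ∣ (c + k))) := by
          apply Finset.filter_congr
          intro k hk
          rw [Finset.mem_Ico] at hk
          obtain ⟨d, rfl⟩ := Nat.exists_eq_add_of_le hk.1
          have hkk : r + 2*a*(kap (a,r) + d) = b0 + 2*a*d := by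
            rw [hb0]; ring
          rw [hkk, linkingNumber_add_mul a b0 d haodd hb0e hb0pos]
          have heq : linkingNumber a b0 + (d:ℤ) = c + ((kap (a,r) + d : ℕ) : ℤ) := by
            rw [hc]; push_cast; ring
          rw [heq]
        rw [hfe]
        exact class_count p hp c _ _
  _ ≤ (p:ℤ) * (Ax x * (2 * Ax x)) := by
        rw [Finset.sum_const, nsmul_eq_mul]
        have h1 : ((CL x).card : ℤ) ≤ (Ax x : ℤ) * (2 * Ax x) := by exact_mod_cast hcardCL
        calc ((CL x).card:ℤ) * p = (p:ℤ) * (CL x).card := mul_comm _ _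
        _ ≤ _ := mul_le_mul_of_nonneg_left h1 (by exact_mod_cast hp.le)

lemma lower_card (m : ℕ) (x : ℝ) (hm : 1 ≤ m) (hx : ((2*m : ℕ):ℝ)^2 ≤ x) :
    ∑ t ∈ Finset.range m, ((Finset.Ico 1 (⌊x/(2*(2*t+1))⌋₊ - 1)).card) ≤ (Nfin x).card := by
  classical
  have hx0 : (0:ℝ) ≤ x := le_trans (by positivity) hx
  rw [← Finset.card_sigma]
  apply Finset.card_le_card_of_injOn (fun tk => (2*tk.1+1, 2 + 2*(2*tk.1+1)*tk.2))
  · rintro ⟨t, k⟩ htk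
    simp only [Finset.mem_coe, Finset.mem_sigma, Finset.mem_range, Finset.mem_Ico] at htk
    obtain ⟨ht, hk1, hk2⟩ := htk
    beta_reduce
    set a := 2*t+1 with ha
    set b := 2 + 2*a*k with hb
    rw [Finset.mem_coe, mem_Nfin]
    have hodd : Odd a := ⟨t, by omega⟩
    refine ⟨?_, ⟨1 + a*k, by rw [hb]; ring⟩, by omega, ?_, ?_⟩
    · -- coprime
      have : Nat.Coprime a (2 + a*(2*k)) ↔ Nat.Coprime a 2 := Nat.coprime_add_mul_left_right a 2 (2*k)
      have h2 : Nat.Coprime a 2 := Nat.coprime_two_right.2 hodd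
      simpa [hb, show 2 + a*(2*k) = 2 + 2*a*k by ring] using this.2 h2
    · -- a < 2 b
      have : 2*a ≤ 2*a*k := Nat.le_mul_of_pos_right (2*a) (by omega)
      simp only [hb]; omega
    · -- max < x
      have hax : ((a:ℕ):ℝ)^2 < x := by
        have h1 : (a:ℝ) < ((2*m:ℕ):ℝ) := by
          have : a < 2*m := by omega
          exact_mod_cast this
        have h2 : ((a:ℕ):ℝ)^2 < ((2*m:ℕ):ℝ)^2 := by
          have ha0 : (0:ℝ) ≤ (a:ℝ) := by positivity
          nlinarith
        linarith
      have hbx : ((b:ℕ):ℝ) < x := by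
        set F := ⌊x/(2*(2*t+1))⌋₊ with hF
        have hkF : k + 2 ≤ F := by omega
        have hFle : (F:ℝ) ≤ x/(2*(2*t+1)) := Nat.floor_le (by positivity)
        have h2a : (0:ℝ) < 2*((2*t+1:ℕ):ℝ) := by positivity
        have hFle' : (F:ℝ) * (2*((2*t+1:ℕ):ℝ)) ≤ x := by
          rw [← le_div_iff₀ h2a]
          convert hFle using 2
          · rfl
          push_cast; ring
        have hble : (b:ℝ) + 4*((2*t+1:ℕ):ℝ) ≤ 2 + (F:ℝ) * (2*((2*t+1:ℕ):ℝ)) := by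
          have : ((b:ℕ):ℝ) + 4*((2*t+1:ℕ):ℝ) = 2 + (((k:ℕ):ℝ)+2) * (2*((2*t+1:ℕ):ℝ)) := by
            rw [hb, ha]; push_cast; ring
          rw [this]
          have : ((k:ℕ):ℝ) + 2 ≤ (F:ℝ) := by exact_mod_cast hkF
          nlinarith
        have h4a : (4:ℝ) ≤ 4*((2*t+1:ℕ):ℝ) := by
          have : (1:ℝ) ≤ ((2*t+1:ℕ):ℝ) := by exact_mod_cast Nat.one_le_iff_ne_zero.2 (by omega)
          linarith
        linarith
      rw [max_lt_iff]
      exact ⟨hax, hbx⟩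
  · rintro ⟨t, k⟩ ht ⟨t', k'⟩ ht' heq
    simp only [Prod.mk.injEq] at heq
    obtain ⟨h1, h2⟩ := heq
    have htt : t = t' := by omega
    subst htt
    have : k = k' := by
      have := Nat.eq_of_mul_eq_mul_left (show 0 < 2*(2*t+1) by omega)
        (show 2*(2*t+1)*k = 2*(2*t+1)*k' by omega)
      exact this
    simp [this]

lemma lower_real (m : ℕ) (x : ℝ) (hm : 1 ≤ m) (hx : ((2*m : ℕ):ℝ)^2 ≤ x) :
    x * (∑ t ∈ Finset.range m, (1:ℝ)/(2*(2*(t:ℝ)+1))) - 3*m ≤ ((Nfin x).card : ℝ) := by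
  have hx0 : (0:ℝ) ≤ x := le_trans (by positivity) hx
  have h := lower_card m x hm hx
  have h2 : (∑ t ∈ Finset.range m, ((Finset.Ico 1 (⌊x/(2*(2*t+1))⌋₊ - 1)).card) : ℝ)
      ≥ ∑ t ∈ Finset.range m, (x/(2*(2*(t:ℝ)+1)) - 3) := by
    push_cast
    refine Finset.sum_le_sum fun t _ => ?_
    rw [Nat.card_Ico]
    set F := ⌊x/(2*(2*t+1))⌋₊ with hF
    have hfl : x/(2*(2*(t:ℝ)+1)) - 1 < (F:ℝ) := Nat.sub_one_lt_floor _
    have hcast : ((F - 1 - 1 : ℕ):ℝ) ≥ (F:ℝ) - 2 := by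
      rcases le_or_gt 2 F with h'|h'
      · have : ((F - 1 - 1:ℕ):ℝ) = (F:ℝ) - 2 := by
          have : F - 1 - 1 = F - 2 := by omega
          rw [this]; push_cast [Nat.cast_sub h']; ring
        linarith
      · interval_cases F <;> norm_num
    calc x/(2*(2*(t:ℝ)+1)) - 3 ≤ (F:ℝ) - 2 := by linarith
    _ ≤ ((F - 1 - 1 : ℕ):ℝ) := hcast
  have h3 : x * (∑ t ∈ Finset.range m, (1:ℝ)/(2*(2*(t:ℝ)+1))) - 3*m
      = ∑ t ∈ Finset.range m, (x/(2*(2*(t:ℝ)+1)) - 3) := by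
    rw [Finset.sum_sub_distrib, Finset.mul_sum, Finset.sum_const, Finset.card_range]
    simp only [nsmul_eq_mul]
    congr 1
    · refine Finset.sum_congr rfl fun t _ => ?_
      field_simp
    · ring
  rw [h3]
  calc ∑ t ∈ Finset.range m, (x/(2*(2*(t:ℝ)+1)) - 3)
      ≤ (∑ t ∈ Finset.range m, ((Finset.Ico 1 (⌊x/(2*(2*t+1))⌋₊ - 1)).card) : ℝ) := h2
  _ ≤ ((Nfin x).card : ℝ) := by exact_mod_cast h

lemma harmonic_odd_tendsto :
    Filter.Tendsto (fun m => ∑ t ∈ Finset.range m, (1:ℝ)/(2*(2*(t:ℝ)+1)))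
      Filter.atTop Filter.atTop := by
  have hcomp : ∀ m, (1/4:ℝ) * (∑ t ∈ Finset.range m, (1 / ((t:ℝ) + 1)))
      ≤ ∑ t ∈ Finset.range m, (1:ℝ)/(2*(2*(t:ℝ)+1)) := by
    intro m
    rw [Finset.mul_sum]
    refine Finset.sum_le_sum fun t _ => ?_
    have he : (1:ℝ)/4 * (1/((t:ℝ)+1)) = 1/(4*((t:ℝ)+1)) := by rw [div_mul_div_comm]; norm_num
    rw [he, div_le_div_iff₀ (by positivity) (by positivity)]
    nlinarith [Nat.cast_nonneg (α := ℝ) t]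
  have hbase := Real.tendsto_sum_range_one_div_nat_succ_atTop
  have h4 : Filter.Tendsto (fun m => (1/4:ℝ) * (∑ t ∈ Finset.range m, (1 / ((t:ℝ) + 1))))
      Filter.atTop Filter.atTop := hbase.const_mul_atTop (by norm_num)
  exact Filter.tendsto_atTop_mono hcomp h4

lemma NCard_div_tendsto : Filter.Tendsto (fun x : ℝ => ((Nfin x).card : ℝ) / x)
    Filter.atTop Filter.atTop := by
  rw [Filter.tendsto_atTop]
  intro C
  obtain ⟨m, hsum, hm1⟩ :=
    ((Filter.tendsto_atTop.1 harmonic_odd_tendsto (C + 1)).and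
      (Filter.eventually_ge_atTop 1)).exists
  rw [Filter.eventually_atTop]
  refine ⟨max (((2*m:ℕ):ℝ)^2) (max (3*m) 1), fun x hx => ?_⟩
  have hx1 : ((2*m:ℕ):ℝ)^2 ≤ x := le_trans (le_max_left _ _) hx
  have hx2 : (3*(m:ℝ)) ≤ x := le_trans (le_trans (le_max_left _ _) (le_max_right _ _)) hx
  have hx3 : (1:ℝ) ≤ x := le_trans (le_trans (le_max_right _ _) (le_max_right _ _)) hx
  have hx0 : (0:ℝ) < x := lt_of_lt_of_le one_pos hx3
  have hlow := lower_real m x hm1 hx1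
  set c := ∑ t ∈ Finset.range m, (1:ℝ)/(2*(2*(t:ℝ)+1)) with hc
  have hdiv : (x * c - 3*m)/x ≤ ((Nfin x).card : ℝ)/x := by gcongr
  have heq : (x * c - 3*m)/x = c - 3*(m:ℝ)/x := by
    rw [sub_div, mul_div_cancel_left₀ _ (ne_of_gt hx0)]
  have h3m : 3*(m:ℝ)/x ≤ 1 := by rw [div_le_one hx0]; exact hx2
  have h3m0 : 0 ≤ 3*(m:ℝ)/x := by positivity
  calc C = (C + 1) - 1 := by ring
  _ ≤ c - 3*(m:ℝ)/x := by linarith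
  _ = (x * c - 3*m)/x := heq.symm
  _ ≤ ((Nfin x).card : ℝ)/x := hdiv

/-- `#S_{<x} / #N_{<x} → 1 − 1/p` as `x → ∞`. -/
theorem stmt9 (p : ℕ) [Fact p.Prime] (hodd : Odd p) :
    Filter.Tendsto
      (fun x : ℝ => (Nat.card ↥(SSetP p x) : ℝ) / (Nat.card ↥(NSet x) : ℝ))
      Filter.atTop (nhds (1 - 1 / (p : ℝ))) := by
  have hp : 0 < p := (Fact.out : p.Prime).pos
  have hpR : (0:ℝ) < p := by exact_mod_cast hp
  have hfun : (fun x : ℝ => (Nat.card ↥(SSetP p x) : ℝ) / (Nat.card ↥(NSet x) : ℝ))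
      = fun x => ((Sfin p x).card : ℝ) / ((Nfin x).card : ℝ) := by
    funext x; rw [Scard_eq, Ncard_eq]
  rw [hfun]
  have hg : Filter.Tendsto (fun x : ℝ => 18 * (x / ((Nfin x).card : ℝ)))
      Filter.atTop (nhds 0) := by
    have h0 := NCard_div_tendsto.inv_tendsto_atTop
    have h1 := h0.const_mul (18:ℝ)
    rw [mul_zero] at h1
    convert h1 using 2 with x
    rw [Pi.inv_apply, inv_div]
  have hev : ∀ᶠ x in Filter.atTop,
      ‖((Sfin p x).card : ℝ) / ((Nfin x).card : ℝ) - (1 - 1/(p:ℝ))‖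
        ≤ 18 * (x / ((Nfin x).card : ℝ)) := by
    filter_upwards [Filter.tendsto_atTop.1 NCard_div_tendsto 1,
      Filter.eventually_ge_atTop (1:ℝ)] with x hnx hx1
    have hx0 : (0:ℝ) < x := lt_of_lt_of_le one_pos hx1
    have hn1 : (1:ℝ) ≤ ((Nfin x).card : ℝ)/x := hnx
    have hn : (0:ℝ) < ((Nfin x).card : ℝ) := by
      nlinarith [div_mul_cancel₀ ((Nfin x).card : ℝ) hx0.ne']
    have hmb := main_bound p hp x
    have hmbR : |(p:ℝ) * ((Sfin p x).card:ℝ) - ((p:ℝ)-1) * ((Nfin x).card:ℝ)|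
        ≤ (p:ℝ) * (((Ax x:ℕ):ℝ) * (2 * ((Ax x:ℕ):ℝ))) := by
      have h2 := (@Int.cast_le ℝ _ _ _).2 hmb
      push_cast at h2
      exact h2
    set n : ℝ := ((Nfin x).card : ℝ)
    set s : ℝ := ((Sfin p x).card : ℝ)
    have hAx : ((Ax x : ℕ):ℝ) ≤ Real.sqrt x + 2 := by
      rw [Ax]
      push_cast
      have := Nat.ceil_lt_add_one (Real.sqrt_nonneg x)
      linarith
    have hsq : Real.sqrt x ^ 2 = x := Real.sq_sqrt hx0.le
    have hs1 : (1:ℝ) ≤ Real.sqrt x := by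
      rw [show (1:ℝ) = Real.sqrt 1 from (Real.sqrt_one).symm]
      exact Real.sqrt_le_sqrt hx1
    have hAx18 : ((Ax x : ℕ):ℝ) * (2 * ((Ax x : ℕ):ℝ)) ≤ 18 * x := by
      have h0 : (0:ℝ) ≤ ((Ax x : ℕ):ℝ) := Nat.cast_nonneg _
      nlinarith [hAx, hsq, hs1]
    have hnum : |(p:ℝ) * s - ((p:ℝ)-1) * n| ≤ (p:ℝ) * (18 * x) :=
      le_trans hmbR (mul_le_mul_of_nonneg_left hAx18 hpR.le)
    have hform : s / n - (1 - 1/(p:ℝ)) = ((p:ℝ) * s - ((p:ℝ)-1) * n)/((p:ℝ) * n) := by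
      field_simp
    rw [Real.norm_eq_abs, hform, abs_div, abs_of_pos (by positivity : (0:ℝ) < (p:ℝ)*n)]
    rw [div_le_iff₀ (by positivity : (0:ℝ) < (p:ℝ)*n)]
    calc |(p:ℝ) * s - ((p:ℝ)-1) * n| ≤ (p:ℝ) * (18 * x) := hnum
    _ = 18 * (x / n) * ((p:ℝ) * n) := by field_simp
  have hdiff : Filter.Tendsto
      (fun x : ℝ => ((Sfin p x).card : ℝ) / ((Nfin x).card : ℝ) - (1 - 1/(p:ℝ)))
      Filter.atTop (nhds 0) := squeeze_zero_norm' hev hg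
  have := hdiff.add_const (1 - 1/(p:ℝ))
  simpa using this
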